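/- Let k be an algebraically closed field of characteristic 0, ζ ∈ k a primitive 3rd root of unity, and b ∈ k a nonzero scalar. Let the 3×3 braiding matrix be q_{11} = −1, q_{12} = b, q_{13} = −b⁻³, q_{21} = ζ²b⁻¹, q_{22} = ζ, q_{23} = ζb, q_{31} = −b³, q_{32} = b⁻¹, q_{33} = −1 (type 𝔤(2,3), first Weyl-groupoid object). Then for every λ ∈ k, the quotient of the free algebra k⟨y_1,y_2,y_3⟩ by the two-sided ideal generated by y_{13}, y_{221}, y_1², y_3², [y_{223}, y_{23}]_c, and [[y_{(13)}, y_2]_c, y_2]_c − λ is a nontrivial algebra. -/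

import Mathlib

/-- The `q`-bilinear form `q(α,β) = ∏ i j, (q i j) ^ (α i * β j)` on `ℕⁿ`-degrees. -/
noncomputable def qForm {k : Type*} [Field k] {n : ℕ} (q : Fin n → Fin n → k)
    (α β : Fin n → ℕ) : k :=
  ∏ i : Fin n, ∏ j : Fin n, q i j ^ (α i * β j)

/-- The braided commutator on pairs (homogeneous element, its `ℕⁿ`-degree):
`[u,v]_c = u v − q(deg u, deg v) v u`. -/
noncomputable def bc {k : Type*} [Field k] {n : ℕ} (q : Fin n → Fin n → k)
    (u v : FreeAlgebra k (Fin n) × (Fin n → ℕ)) :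
    FreeAlgebra k (Fin n) × (Fin n → ℕ) :=
  (u.1 * v.1 - qForm q u.2 v.2 • (v.1 * u.1), fun i => u.2 i + v.2 i)

/-- The generator `y i` of the free algebra, together with its degree `e_i`. -/
noncomputable def ygen (k : Type*) [Field k] {n : ℕ} (i : Fin n) :
    FreeAlgebra k (Fin n) × (Fin n → ℕ) :=
  (FreeAlgebra.ι k i, fun j => if j = i then 1 else 0)

set_option maxHeartbeats 4000000 in
theorem statement_18 {k : Type*} [Field k] [IsAlgClosed k] [CharZero k]
    (ζ : k) (hζ : IsPrimitiveRoot ζ 3) (b : k) (hb : b ≠ 0)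
    (lam : k)
    (q : Fin 3 → Fin 3 → k) (hq : q = ![![-1, b, -(b ^ 3)⁻¹], ![ζ ^ 2 * b⁻¹, ζ, ζ * b], ![-b ^ 3, b⁻¹, -1]]) :
    (1 : FreeAlgebra k (Fin 3)) ∉ TwoSidedIdeal.span
      ({(bc q (ygen k 0) (ygen k 2)).1,
        (bc q (ygen k 1) (bc q (ygen k 1) (ygen k 0))).1,
        FreeAlgebra.ι k (0 : Fin 3) ^ 2,
        FreeAlgebra.ι k (2 : Fin 3) ^ 2,
        (bc q (bc q (ygen k 1) (bc q (ygen k 1) (ygen k 2))) (bc q (ygen k 1) (ygen k 2))).1,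
        (bc q (bc q (bc q (ygen k 0) (bc q (ygen k 1) (ygen k 2))) (ygen k 1)) (ygen k 1)).1 - algebraMap k (FreeAlgebra k (Fin 3)) lam} : Set (FreeAlgebra k (Fin 3))) := by
  have hζ3 : ζ ^ 3 = 1 := hζ.pow_eq_one
  have hζne : ζ ≠ 1 := hζ.ne_one (by norm_num)
  have hζ1 : (1 : k) - ζ ≠ 0 := sub_ne_zero.mpr (Ne.symm hζne)
  have hsum : ζ ^ 2 + ζ + 1 = 0 := by
    have h2 : (ζ - 1) * (ζ ^ 2 + ζ + 1) = 0 := by linear_combination hζ3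
    rcases mul_eq_zero.mp h2 with h' | h'
    · exact absurd (sub_eq_zero.mp h') hζne
    · exact h'
  have hp4 : ζ ^ 4 = ζ := by rw [pow_succ, hζ3, one_mul]
  have hp5 : ζ ^ 5 = ζ ^ 2 := by rw [pow_succ, hp4]; ring
  have hp6 : ζ ^ 6 = 1 := by rw [pow_succ, hp5, ← pow_succ, hζ3]
  have hp7 : ζ ^ 7 = ζ := by rw [pow_succ, hp6, one_mul]
  have hp8 : ζ ^ 8 = ζ ^ 2 := by rw [pow_succ, hp7]; ring
  have hp9 : ζ ^ 9 = 1 := by rw [pow_succ, hp8, ← pow_succ, hζ3]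
  obtain ⟨c, hclam⟩ : ∃ c : k, 3 * (1 - ζ) * b ^ 4 * c = lam :=
    ⟨lam * (3 * (1 - ζ) * b ^ 4)⁻¹, by field_simp⟩
  set M : Fin 3 → Matrix (Fin 4) (Fin 4) k :=
    ![!![0,1,1,0; 0,0,0,-1; 0,0,0,1; 0,0,0,0],
      !![1,0,0,0; 0,b,0,0; 0,0,ζ*b,0; 0,0,0,ζ*b^2],
      !![0,0,0,0; b^3*c,0,0,0; -(b^3*c),0,0,0; 0,c,c,0]] with hM
  set φ : FreeAlgebra k (Fin 3) →ₐ[k] Matrix (Fin 4) (Fin 4) k := FreeAlgebra.lift k M with hφ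
  have hι : ∀ i, φ (ygen k i).1 = M i := fun i => by
    rw [show (ygen k i).1 = FreeAlgebra.ι k i from rfl, hφ]
    exact FreeAlgebra.lift_ι_apply ..
  have hbc : ∀ u v, φ ((bc q u v).1)
      = φ u.1 * φ v.1 - qForm q u.2 v.2 • (φ v.1 * φ u.1) := by
    intro u v; simp [bc, map_sub, map_mul, map_smul]
  -- scalar values of qForm
  have hs1 : qForm q (ygen k 0).2 (ygen k 2).2 = -(b ^ 3)⁻¹ := by
    simp [hq, qForm, ygen, Fin.prod_univ_three]
  have hsa : qForm q (ygen k 1).2 (ygen k 0).2 = ζ ^ 2 * b⁻¹ := by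
    simp [hq, qForm, ygen, Fin.prod_univ_three]
  have hsb : qForm q (ygen k 1).2 (bc q (ygen k 1) (ygen k 0)).2 = ζ ^ 3 * b⁻¹ := by
    simp [hq, qForm, bc, ygen, Fin.prod_univ_three]; ring
  have hs2 : qForm q (ygen k 1).2 (ygen k 2).2 = ζ * b := by
    simp [hq, qForm, ygen, Fin.prod_univ_three]
  have hs3 : qForm q (ygen k 1).2 (bc q (ygen k 1) (ygen k 2)).2 = ζ ^ 2 * b := by
    simp [hq, qForm, bc, ygen, Fin.prod_univ_three]; ring
  have hs4 : qForm q (bc q (ygen k 1) (bc q (ygen k 1) (ygen k 2))).2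
      (bc q (ygen k 1) (ygen k 2)).2 = -(ζ * b) := by
    simp [hq, qForm, bc, ygen, Fin.prod_univ_three]
    field_simp
    linear_combination ζ * hζ3
  have hs5 : qForm q (ygen k 0).2 (bc q (ygen k 1) (ygen k 2)).2 = -(b ^ 2)⁻¹ := by
    simp [hq, qForm, bc, ygen, Fin.prod_univ_three]
    field_simp
  have hs6 : qForm q (bc q (ygen k 0) (bc q (ygen k 1) (ygen k 2))).2 (ygen k 1).2 = ζ := by
    simp [hq, qForm, bc, ygen, Fin.prod_univ_three]
    field_simp
  have hs7 : qForm q (bc q (bc q (ygen k 0) (bc q (ygen k 1) (ygen k 2))) (ygen k 1)).2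
      (ygen k 1).2 = ζ ^ 2 := by
    simp [hq, qForm, bc, ygen, Fin.prod_univ_three]
    field_simp
  -- intermediate matrices
  set A : Matrix (Fin 4) (Fin 4) k :=
    !![0,0,0,0; b^4*(1-ζ)*c,0,0,0; 0,0,0,0; 0,0,ζ*b^2*(1-ζ)*c,0] with hA
  have hMA : M 1 * M 2 - (ζ * b) • (M 2 * M 1) = A := by
    ext i j
    fin_cases i <;> fin_cases j <;>
      simp [hM, hA, Matrix.mul_apply, Fin.sum_univ_four, Matrix.vecHead, Matrix.vecTail] <;> ring
  set C : Matrix (Fin 4) (Fin 4) k :=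
    !![b^4*(1-ζ)*c,0,0,0; 0,b^2*(1-ζ)*c,b^2*(1-ζ)^2*c,0; 0,0,ζ*b^2*(1-ζ)*c,0; 0,0,0,ζ*(1-ζ)*c] with hC
  have hMC : M 0 * A - (-(b ^ 2)⁻¹) • (A * M 0) = C := by
    ext i j
    fin_cases i <;> fin_cases j <;>
      simp [hM, hA, hC, Matrix.mul_apply, Fin.sum_univ_four, Matrix.vecHead, Matrix.vecTail] <;>
      field_simp <;> ring
  set D : Matrix (Fin 4) (Fin 4) k :=
    !![b^4*(1-ζ)^2*c,0,0,0; 0,b^3*(1-ζ)^2*c,0,0; 0,0,ζ^2*b^3*(1-ζ)^2*c,0; 0,0,0,ζ^2*b^2*(1-ζ)^2*c] with hD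
  have hMD : C * M 1 - ζ • (M 1 * C) = D := by
    ext i j
    fin_cases i <;> fin_cases j <;>
      simp [hM, hC, hD, Matrix.mul_apply, Fin.sum_univ_four, Matrix.vecHead, Matrix.vecTail] <;> ring
  have hMZ : D * M 1 - ζ ^ 2 • (M 1 * D) = algebraMap k (Matrix (Fin 4) (Fin 4) k) lam := by
    rw [Algebra.algebraMap_eq_smul_one]
    ext i j
    fin_cases i <;> fin_cases j <;>
      simp [hM, hD, Matrix.mul_apply, Fin.sum_univ_four, Matrix.vecHead, Matrix.vecTail,
        Matrix.one_apply] <;>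
      first
        | linear_combination hclam + b ^ 4 * c * (1 - ζ) * (ζ - 2) * hsum
        | linear_combination hclam + b ^ 4 * c * (1 - ζ) * (ζ ^ 4 - 2 * ζ ^ 3 + 3 * ζ - 3) * hsum
  -- the six relations
  have h1 : φ ((bc q (ygen k 0) (ygen k 2)).1) = 0 := by
    rw [hbc, hι, hι, hs1]
    ext i j
    fin_cases i <;> fin_cases j <;>
      simp [hM, Matrix.mul_apply, Fin.sum_univ_four, Matrix.vecHead, Matrix.vecTail] <;>
      field_simp <;> ring
  have h2 : φ ((bc q (ygen k 1) (bc q (ygen k 1) (ygen k 0))).1) = 0 := by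
    rw [hbc, hbc, hι, hι, hsa, hsb]
    ext i j
    fin_cases i <;> fin_cases j <;>
      simp [hM, Matrix.mul_apply, Fin.sum_univ_four, Matrix.vecHead, Matrix.vecTail] <;>
      field_simp <;> ring_nf <;>
      simp [hζ3, hp4, hp5, hp6, hp7, hp8, hp9] <;> ring_nf
  have h3 : φ (FreeAlgebra.ι k (0 : Fin 3) ^ 2) = 0 := by
    rw [map_pow, show FreeAlgebra.ι k (0 : Fin 3) = (ygen k 0).1 from rfl, hι]
    ext i j
    fin_cases i <;> fin_cases j <;>
      simp [hM, pow_two, Matrix.mul_apply, Fin.sum_univ_four, Matrix.vecHead, Matrix.vecTail]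
  have h4 : φ (FreeAlgebra.ι k (2 : Fin 3) ^ 2) = 0 := by
    rw [map_pow, show FreeAlgebra.ι k (2 : Fin 3) = (ygen k 2).1 from rfl, hι]
    ext i j
    fin_cases i <;> fin_cases j <;>
      simp [hM, pow_two, Matrix.mul_apply, Fin.sum_univ_four, Matrix.vecHead, Matrix.vecTail] <;>
      ring
  have h5 : φ ((bc q (bc q (ygen k 1) (bc q (ygen k 1) (ygen k 2))) (bc q (ygen k 1) (ygen k 2))).1) = 0 := by
    rw [hbc, hbc, hbc, hι, hι, hs2, hs3, hs4, hMA]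
    ext i j
    fin_cases i <;> fin_cases j <;>
      simp [hM, hA, Matrix.mul_apply, Fin.sum_univ_four, Matrix.vecHead, Matrix.vecTail] <;> ring
  have h6 : φ ((bc q (bc q (bc q (ygen k 0) (bc q (ygen k 1) (ygen k 2))) (ygen k 1)) (ygen k 1)).1
      - algebraMap k (FreeAlgebra k (Fin 3)) lam) = 0 := by
    rw [map_sub, AlgHom.commutes, hbc, hbc, hbc, hbc, hι, hι, hι,
      hs2, hs5, hs6, hs7, hMA, hMC, hMD, hMZ, sub_self]
  -- conclusion
  intro hmem
  rw [TwoSidedIdeal.mem_span_iff] at hmem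
  have hker := hmem (TwoSidedIdeal.ker φ) ?_
  · rw [TwoSidedIdeal.mem_ker, map_one] at hker
    exact one_ne_zero hker
  · intro x hx
    simp only [Set.mem_insert_iff, Set.mem_singleton_iff] at hx
    rw [SetLike.mem_coe, TwoSidedIdeal.mem_ker]
    rcases hx with h | h | h | h | h | h <;> rw [h]
    exacts [h1, h2, h3, h4, h5, h6]
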